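/- For |q|<1, φ(-q) = E(q)²/E(q²), where φ(q) = ∑_{n∈ℤ} q^{n²} and E(q) = ∏_{n≥1}(1-q^n). -/

import Mathlib

open scoped BigOperators
open Finset Filter Topology

noncomputable def E (q : ℂ) : ℂ := ∏' n : ℕ, (1 - q ^ (n + 1))

noncomputable def ramaf (a b : ℂ) : ℂ :=
  ∑' n : ℤ, a ^ (n * (n + 1) / 2) * b ^ (n * (n - 1) / 2)

noncomputable def phi (q : ℂ) : ℂ := ∑' n : ℤ, q ^ (n ^ 2)

noncomputable def psi (q : ℂ) : ℂ := ∑' n : ℤ, q ^ (2 * n ^ 2 - n)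


/-! ### Auxiliary lemmas -/

section JTPAux
open Complex


lemma jtp_multipliable {f : ℕ → ℂ} (h : ∀ n, ‖f n‖ < 1) (hs : Summable fun n => ‖f n‖) :
    Multipliable (fun n => 1 - f n) := by
  have hne : ∀ n, (1 : ℂ) - f n ≠ 0 := by
    intro n hn
    have : ‖f n‖ = 1 := by
      have : f n = 1 := by linear_combination -hn
      simp [this]
    linarith [h n]
  have hlog : Summable (fun n => Complex.log (1 - f n)) := by
    apply Summable.of_norm_bounded_eventually_nat (g := fun n => (3/2) * ‖f n‖) (hs.mul_left _)
    have h0 : Tendsto (fun n => ‖f n‖) atTop (𝓝 0) := hs.tendsto_atTop_zero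
    filter_upwards [h0.eventually_le_const (by norm_num : (0:ℝ) < 1/2)] with n hn
    have := Complex.norm_log_one_add_half_le_self (z := -f n) (by simpa using hn)
    simpa [sub_eq_add_neg] using this
  exact Complex.multipliable_of_summable_log hlog

lemma aux_exp_le_one_sub {x r : ℝ} (hx0 : 0 ≤ x) (hxr : x ≤ r) (hr : r < 1) :
    Real.exp (-(x/(1-r))) ≤ 1 - x := by
  have h1r : 0 < 1 - r := by linarith
  set y := x/(1-r) with hy
  have hy0 : 0 ≤ y := div_nonneg hx0 h1r.le
  have h2 : 1 + y ≤ Real.exp y := by linarith [Real.add_one_le_exp y]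
  have h3 : Real.exp (-y) * Real.exp y = 1 := by rw [← Real.exp_add]; simp
  have h4 : (1 : ℝ) ≤ (1 - x) * (1 + y) := by
    have hxy : x ≤ y * (1-x) := by
      rw [hy, div_mul_eq_mul_div, le_div_iff₀ h1r]
      nlinarith
    nlinarith
  nlinarith [Real.exp_pos (-y), Real.exp_pos y,
    mul_le_mul_of_nonneg_left h2 (Real.exp_pos (-y)).le]

lemma aux_sum_pow_le {r : ℝ} (h0 : 0 ≤ r) (h1 : r < 1) (t : ℕ) :
    ∑ j ∈ Finset.range t, r^(j+1) ≤ r/(1-r) := by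
  have h1r : 0 < 1 - r := by linarith
  have : ∑ j ∈ Finset.range t, r^(j+1) = r * ∑ j ∈ Finset.range t, r^j := by
    rw [Finset.mul_sum]; exact Finset.sum_congr rfl fun j _ => by ring
  rw [this, div_eq_mul_one_div]
  apply mul_le_mul_of_nonneg_left _ h0
  rw [geom_sum_eq (by intro h; rw [h] at h1; linarith : r ≠ 1)]
  have e : (r^t - 1)/(r-1) = (1-r^t)/(1-r) := by
    rw [div_eq_div_iff (by linarith) (by linarith)]; ring
  rw [e, div_le_div_iff₀ h1r h1r]
  nlinarith [pow_nonneg h0 t]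

lemma jtp_prod_lower {r : ℝ} (h0 : 0 ≤ r) (h1 : r < 1) (t : ℕ) :
    Real.exp (-(r/(1-r)^2)) ≤ ∏ j ∈ Finset.range t, (1 - r^(j+1)) := by
  have h1r : 0 < 1 - r := by linarith
  calc Real.exp (-(r/(1-r)^2)) ≤ ∏ j ∈ Finset.range t, Real.exp (-(r^(j+1)/(1-r))) := by
        rw [← Real.exp_sum]
        apply Real.exp_le_exp.mpr
        rw [Finset.sum_neg_distrib, neg_le_neg_iff, ← Finset.sum_div]
        rw [div_le_div_iff₀ h1r (by positivity)]
        calc (∑ j ∈ Finset.range t, r^(j+1)) * (1-r)^2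
            = ((∑ j ∈ Finset.range t, r^(j+1)) * (1-r)) * (1-r) := by ring
          _ ≤ (r/(1-r) * (1-r)) * (1-r) := by
              apply mul_le_mul_of_nonneg_right _ h1r.le
              apply mul_le_mul_of_nonneg_right (aux_sum_pow_le h0 h1 t) h1r.le
          _ = r * (1-r) := by field_simp
    _ ≤ ∏ j ∈ Finset.range t, (1 - r^(j+1)) := by
        apply Finset.prod_le_prod (fun j _ => (Real.exp_pos _).le)
        intro j _
        apply aux_exp_le_one_sub (pow_nonneg h0 _) _ h1
        calc r^(j+1) ≤ r^1 := pow_le_pow_of_le_one h0 h1.le (by omega)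
          _ = r := pow_one r

lemma jtp_norm_prod_le {Q : ℂ} (h1 : ‖Q‖ < 1) (t : ℕ) (e : ℕ → ℕ) (he : ∀ j, j + 1 ≤ e j) :
    ‖∏ j ∈ Finset.range t, (1 - Q^(e j))‖ ≤ Real.exp (‖Q‖/(1-‖Q‖)) := by
  have h0 : 0 ≤ ‖Q‖ := norm_nonneg Q
  rw [norm_prod]
  calc ∏ j ∈ Finset.range t, ‖1 - Q^(e j)‖
      ≤ ∏ j ∈ Finset.range t, Real.exp (‖Q‖^(j+1)) := by
        apply Finset.prod_le_prod (fun j _ => norm_nonneg _)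
        intro j _
        calc ‖1 - Q^(e j)‖ ≤ ‖(1:ℂ)‖ + ‖Q^(e j)‖ := norm_sub_le _ _
          _ = 1 + ‖Q‖^(e j) := by rw [norm_one, norm_pow]
          _ ≤ 1 + ‖Q‖^(j+1) := by
              have := pow_le_pow_of_le_one h0 h1.le (he j)
              linarith
          _ ≤ Real.exp (‖Q‖^(j+1)) := by
              linarith [Real.add_one_le_exp (‖Q‖^(j+1))]
    _ = Real.exp (∑ j ∈ Finset.range t, ‖Q‖^(j+1)) := (Real.exp_sum _ _).symm
    _ ≤ Real.exp (‖Q‖/(1-‖Q‖)) := Real.exp_le_exp.mpr (aux_sum_pow_le h0 h1 t)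

lemma jtp_norm_prod_ge {Q : ℂ} (h1 : ‖Q‖ < 1) (t : ℕ) :
    Real.exp (-(‖Q‖/(1-‖Q‖)^2)) ≤ ‖∏ j ∈ Finset.range t, (1 - Q^(j+1))‖ := by
  have h0 : 0 ≤ ‖Q‖ := norm_nonneg Q
  rw [norm_prod]
  calc Real.exp (-(‖Q‖/(1-‖Q‖)^2)) ≤ ∏ j ∈ Finset.range t, (1 - ‖Q‖^(j+1)) :=
        jtp_prod_lower h0 h1 t
    _ ≤ ∏ j ∈ Finset.range t, ‖1 - Q^(j+1)‖ := by
        apply Finset.prod_le_prod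
        · intro j _
          have : ‖Q‖^(j+1) ≤ ‖Q‖^1 := pow_le_pow_of_le_one h0 h1.le (by omega)
          simp only [pow_one] at this
          linarith
        · intro j _
          calc 1 - ‖Q‖^(j+1) = ‖(1:ℂ)‖ - ‖Q^(j+1)‖ := by rw [norm_one, norm_pow]
            _ ≤ ‖1 - Q^(j+1)‖ := norm_sub_norm_le _ _


noncomputable def gbC (Q : ℂ) (n k : ℕ) : ℂ :=
  if k ≤ n then
    (∏ j ∈ Finset.range k, (1 - Q^(n-k+j+1))) / (∏ j ∈ Finset.range k, (1 - Q^(j+1)))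
  else 0

lemma gbC_zero (Q : ℂ) (n : ℕ) : gbC Q n 0 = 1 := by simp [gbC]

lemma gbC_self {Q : ℂ} (hQ : ∀ j : ℕ, (1:ℂ) - Q^(j+1) ≠ 0) (n : ℕ) : gbC Q n n = 1 := by
  have h : ∀ j ∈ Finset.range n, (1 - Q^(n-n+j+1)) = (1 - Q^(j+1)) := by
    intro j _; simp
  have hD : (∏ j ∈ Finset.range n, (1 - Q^(j+1))) ≠ 0 :=
    Finset.prod_ne_zero_iff.mpr (fun j _ => hQ j)
  simp [gbC, Finset.prod_congr rfl h, div_self hD]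

lemma gbC_pascal {Q : ℂ} (hQ : ∀ j : ℕ, (1:ℂ) - Q^(j+1) ≠ 0) (n k : ℕ)
    (h1 : 1 ≤ k) (h2 : k ≤ n + 1) :
    gbC Q (n+1) k = gbC Q n k + Q^(n+1-k) * gbC Q n (k-1) := by
  obtain ⟨m, rfl⟩ : ∃ m, k = m + 1 := ⟨k - 1, by omega⟩
  have hD : ∀ t : ℕ, (∏ j ∈ Finset.range t, (1 - Q^(j+1))) ≠ 0 :=
    fun t => Finset.prod_ne_zero_iff.mpr (fun j _ => hQ j)
  rcases Nat.lt_or_ge n (m+1) with hn | hn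
  · -- k = n + 1 case : n = m
    have hm : n = m := by omega
    subst hm
    rw [gbC_self hQ]
    rw [show gbC Q n (n+1) = 0 from by rw [gbC, if_neg (by omega)]]
    simp [gbC_self hQ]
  · -- 1 ≤ k ≤ n
    obtain ⟨p, rfl⟩ : ∃ p, n = m + 1 + p := ⟨n - (m+1), by omega⟩
    have e1 : gbC Q (m+1+p+1) (m+1) =
        ((∏ j ∈ Finset.range m, (1 - Q^(p+j+2))) * (1 - Q^(m+1+p+1))) /
          (∏ j ∈ Finset.range (m+1), (1 - Q^(j+1))) := by
      rw [gbC, if_pos (by omega)]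
      congr 1
      rw [Finset.prod_range_succ]
      congr 1
      · apply Finset.prod_congr rfl; intro j _; congr 2; omega
      · congr 2; omega
    have e2 : gbC Q (m+1+p) (m+1) =
        ((1 - Q^(p+1)) * (∏ j ∈ Finset.range m, (1 - Q^(p+j+2)))) /
          (∏ j ∈ Finset.range (m+1), (1 - Q^(j+1))) := by
      rw [gbC, if_pos (by omega)]
      congr 1
      rw [Finset.prod_range_succ']
      rw [mul_comm]
      congr 1
      · congr 2; omega
      · apply Finset.prod_congr rfl; intro j _; congr 2; omega
    have e3 : gbC Q (m+1+p) m =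
        (∏ j ∈ Finset.range m, (1 - Q^(p+j+2))) / (∏ j ∈ Finset.range m, (1 - Q^(j+1))) := by
      rw [gbC, if_pos (by omega)]
      congr 1
      apply Finset.prod_congr rfl; intro j _; congr 2; omega
    have e4 : m+1+p + 1 - (m+1) = p + 1 := by omega
    rw [e1, e2, Nat.add_sub_cancel, e3, e4]
    rw [Finset.prod_range_succ]
    field_simp [hD m, hQ m]
    ring

lemma gbC_qbin {Q : ℂ} (hQ : ∀ j : ℕ, (1:ℂ) - Q^(j+1) ≠ 0) (x : ℂ) (n : ℕ) :
    ∏ j ∈ Finset.range n, (1 + x * Q^j)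
      = ∑ k ∈ Finset.range (n+1), Q^(k.choose 2) * gbC Q n k * x^k := by
  induction n with
  | zero => simp [gbC_zero]
  | succ n ih =>
    have hgb0 : gbC Q n (n+1) = 0 := by rw [gbC, if_neg (by omega)]
    have key : ∀ k ∈ Finset.range (n+1),
        Q^((k+1).choose 2) * gbC Q (n+1) (k+1) * x^(k+1)
        = Q^((k+1).choose 2) * gbC Q n (k+1) * x^(k+1)
          + (x*Q^n) * (Q^(k.choose 2) * gbC Q n k * x^k) := by
      intro k hk
      rw [Finset.mem_range] at hk
      rw [gbC_pascal hQ n (k+1) (by omega) (by omega), Nat.add_sub_cancel]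
      have c1 : (k+1).choose 2 = k.choose 2 + k := by
        have h : (k+1).choose (1+1) = k.choose 1 + k.choose (1+1) :=
          Nat.choose_succ_succ k 1
        norm_num [Nat.choose_one_right] at h
        omega
      have c2 : n + 1 - (k+1) = n - k := by omega
      have e : Q^(k.choose 2 + k) * Q^(n-k) = Q^(k.choose 2) * Q^n := by
        rw [← pow_add, ← pow_add]
        congr 1
        omega
      rw [c1, c2]
      linear_combination (gbC Q n k * x^(k+1)) * e
    rw [Finset.prod_range_succ, ih,
      Finset.sum_range_succ' (fun k => Q^(k.choose 2) * gbC Q (n+1) k * x^k) (n+1)]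
    rw [Finset.sum_congr rfl key, Finset.sum_add_distrib]
    have hb : ∑ k ∈ Finset.range (n+1), (x*Q^n) * (Q^(k.choose 2) * gbC Q n k * x^k)
        = (x*Q^n) * ∑ k ∈ Finset.range (n+1), Q^(k.choose 2)*gbC Q n k*x^k :=
      (Finset.mul_sum _ _ _).symm
    have ha : (∑ k ∈ Finset.range (n+1), Q^((k+1).choose 2) * gbC Q n (k+1) * x^(k+1))
          + (Q^(Nat.choose 0 2) * gbC Q (n+1) 0 * x^0)
        = ∑ k ∈ Finset.range (n+1), Q^(k.choose 2)*gbC Q n k*x^k := by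
      have h0 : (Q^(Nat.choose 0 2) * gbC Q (n+1) 0 * x^0)
          = Q^(Nat.choose 0 2) * gbC Q n 0 * x^0 := by rw [gbC_zero, gbC_zero]
      rw [h0, ← Finset.sum_range_succ' (fun k => Q^(k.choose 2) * gbC Q n k * x^k) (n+1),
        Finset.sum_range_succ]
      simp [hgb0]
    linear_combination (-1 : ℂ) * ha - hb

lemma aux_prod_zpow {q : ℂ} (hq0 : q ≠ 0) (e : ℕ → ℤ) (t : ℕ) :
    ∏ j ∈ Finset.range t, q^(e j) = q^(∑ j ∈ Finset.range t, e j) := by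
  induction t with
  | zero => simp
  | succ t ih => rw [Finset.prod_range_succ, Finset.sum_range_succ, zpow_add₀ hq0, ih]

lemma aux_sum_odds (N : ℕ) : ∑ j ∈ Finset.range N, (2*j+1 : ℤ) = (N:ℤ)^2 := by
  induction N with
  | zero => simp
  | succ N ih => rw [Finset.sum_range_succ, ih]; push_cast; ring

lemma jtp_finite {q : ℂ} (hq0 : q ≠ 0) (hQ : ∀ j : ℕ, (1:ℂ) - (q^2)^(j+1) ≠ 0) (N : ℕ) :
    (∏ i ∈ Finset.range N, (1 - q^(2*i+1)))^2
      = ∑ k ∈ Finset.range (2*N+1), (-1:ℂ)^(N+k) * q^(((k:ℤ) - N)^2) * gbC (q^2) (2*N) k := by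
  set x : ℂ := -(q^((1:ℤ) - 2*N)) with hx
  have hqb := gbC_qbin hQ x (2*N)
  -- rewrite LHS of hqb
  have hterm : ∀ j : ℕ, 1 + x * (q^2)^j = 1 - q^(2*(j:ℤ)+1-2*N) := by
    intro j
    rw [hx]
    have : (q^2)^j = q^((2*j : ℤ)) := by
      rw [← zpow_natCast (q^2) j, ← zpow_natCast q 2, ← zpow_mul]
      norm_num
    rw [this, neg_mul, ← sub_eq_add_neg, ← zpow_add₀ hq0]
    ring_nf
  have hL : ∏ j ∈ Finset.range (2*N), (1 + x * (q^2)^j)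
      = (-1:ℂ)^N * q^(-(N:ℤ)^2) * (∏ i ∈ Finset.range N, (1 - q^(2*i+1)))^2 := by
    calc ∏ j ∈ Finset.range (2*N), (1 + x * (q^2)^j)
        = ∏ j ∈ Finset.range (N+N), (1 - q^(2*(j:ℤ)+1-2*N)) := by
          rw [show 2*N = N+N by ring]
          exact Finset.prod_congr rfl fun j _ => hterm j
      _ = (∏ j ∈ Finset.range N, (1 - q^(2*(j:ℤ)+1-2*N)))
            * ∏ j ∈ Finset.range N, (1 - q^(2*(j:ℤ)+1)) := by
          rw [Finset.prod_range_add]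
          congr 1
          apply Finset.prod_congr rfl
          intro j _
          congr 1
          push_cast
          ring_nf
      _ = ((-1:ℂ)^N * q^(-(N:ℤ)^2) * ∏ j ∈ Finset.range N, (1 - q^(2*(j:ℤ)+1)))
            * ∏ j ∈ Finset.range N, (1 - q^(2*(j:ℤ)+1)) := by
          congr 1
          rw [← Finset.prod_range_reflect]
          have hterm2 : ∀ j ∈ Finset.range N, (1 - q^(2*((N - 1 - j : ℕ):ℤ)+1-2*N))
              = (-(q^(-(2*(j:ℤ)+1)))) * (1 - q^(2*(j:ℤ)+1)) := by
            intro j hj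
            rw [Finset.mem_range] at hj
            have he : (2*((N - 1 - j : ℕ):ℤ)+1-2*N) = -(2*(j:ℤ)+1) := by
              have : ((N - 1 - j : ℕ):ℤ) = (N:ℤ) - 1 - j := by
                push_cast [Nat.cast_sub (by omega : j ≤ N - 1), Nat.cast_sub (by omega : 1 ≤ N)]
                ring
              rw [this]; ring
            rw [he]
            have hinv : q^(-(2*(j:ℤ)+1)) * q^(2*(j:ℤ)+1) = 1 := by
              rw [← zpow_add₀ hq0, show -(2*(j:ℤ)+1) + (2*(j:ℤ)+1) = 0 by ring, zpow_zero]
            linear_combination (-1:ℂ) * hinv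
          have hconst : ∏ j ∈ Finset.range N, (-(q^(-(2*(j:ℤ)+1)))) = (-1:ℂ)^N * q^(-(N:ℤ)^2) := by
            calc ∏ j ∈ Finset.range N, (-(q^(-(2*(j:ℤ)+1))))
                = ∏ j ∈ Finset.range N, ((-1) * q^(-(2*(j:ℤ)+1))) :=
                  Finset.prod_congr rfl (fun j _ => by ring)
              _ = ((-1:ℂ))^N * q^(∑ j ∈ Finset.range N, -(2*(j:ℤ)+1)) := by
                  rw [Finset.prod_mul_distrib, Finset.prod_const, Finset.card_range,
                    aux_prod_zpow hq0]
              _ = (-1:ℂ)^N * q^(-(N:ℤ)^2) := by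
                  congr 1
                  rw [Finset.sum_neg_distrib, aux_sum_odds]
          rw [Finset.prod_congr rfl hterm2, Finset.prod_mul_distrib, hconst]
      _ = (-1:ℂ)^N * q^(-(N:ℤ)^2) * (∏ i ∈ Finset.range N, (1 - q^(2*i+1)))^2 := by
          have : ∀ j ∈ Finset.range N, (1 - q^(2*(j:ℤ)+1)) = (1 - q^(2*j+1)) := by
            intro j _
            rw [show (2*(j:ℤ)+1) = ((2*j+1 : ℕ) : ℤ) by push_cast; ring, zpow_natCast]
          rw [Finset.prod_congr rfl this]
          ring
  -- rewrite each RHS term of hqb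
  have hR : ∀ k ∈ Finset.range (2*N+1),
      (q^2)^(k.choose 2) * gbC (q^2) (2*N) k * x^k
      = (-1:ℂ)^k * q^(((k:ℤ) - N)^2 - (N:ℤ)^2) * gbC (q^2) (2*N) k := by
    intro k hk
    have hxk : x^k = (-1:ℂ)^k * q^(((1:ℤ) - 2*N)*k) := by
      rw [hx, neg_pow, zpow_mul, zpow_natCast]
    have hq2 : ((q^2:ℂ))^(k.choose 2) = q^((2 * (k.choose 2) : ℤ)) := by
      rw [← zpow_natCast (q^2) (k.choose 2), ← zpow_natCast q 2, ← zpow_mul]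
      norm_num
    have hch : (2 * (k.choose 2) : ℤ) = (k:ℤ)*(k-1) := by
      have h2 : (k.choose 2) * 2 = k * (k-1) :=
        Nat.choose_two_right k ▸ Nat.div_mul_cancel (Nat.even_mul_pred_self k).two_dvd
      rcases k with _ | s
      · simp
      · have h3 : ((s+1).choose 2 : ℤ) * 2 = (s+1) * s := by
          have : (s+1) - 1 = s := by omega
          rw [this] at h2
          exact_mod_cast congrArg (Nat.cast : ℕ → ℤ) h2
        push_cast
        linarith
    rw [hxk, hq2, hch]
    rw [show (q:ℂ)^((k:ℤ)*(k-1)) * gbC (q^2) (2*N) k * ((-1:ℂ)^k * q^(((1:ℤ) - 2*N)*k))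
        = (-1:ℂ)^k * (q^((k:ℤ)*(k-1)) * q^(((1:ℤ) - 2*N)*k)) * gbC (q^2) (2*N) k by ring]
    rw [← zpow_add₀ hq0]
    congr 2
    ring
  -- combine
  have := hqb
  rw [hL, Finset.sum_congr rfl hR] at this
  -- this : (-1)^N * q^(-(N²)) * LHS² = ∑ (-1)^k q^{(k-N)²-N²} gb
  have hmul := congrArg (fun z => ((-1:ℂ)^N * q^((N:ℤ)^2)) * z) this
  simp only [Finset.mul_sum] at hmul
  calc (∏ i ∈ Finset.range N, (1 - q^(2*i+1)))^2
      = ((-1:ℂ)^N * q^((N:ℤ)^2)) * ((-1:ℂ)^N * q^(-(N:ℤ)^2)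
          * (∏ i ∈ Finset.range N, (1 - q^(2*i+1)))^2) := by
        have h1 : (q:ℂ)^((N:ℤ)^2) * q^(-(N:ℤ)^2) = 1 := by
          rw [← zpow_add₀ hq0]; simp
        have h2 : ((-1:ℂ))^N * (-1:ℂ)^N = 1 := by
          rw [← pow_add]
          exact Even.neg_one_pow ⟨N, rfl⟩
        linear_combination (-((∏ i ∈ Finset.range N, (1 - q^(2*i+1)))^2))*h2
          - ((∏ i ∈ Finset.range N, (1 - q^(2*i+1)))^2 * ((-1:ℂ)^N * (-1:ℂ)^N))*h1
    _ = ∑ k ∈ Finset.range (2*N+1), (-1:ℂ)^(N+k) * q^(((k:ℤ) - N)^2) * gbC (q^2) (2*N) k := by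
        rw [hmul]
        apply Finset.sum_congr rfl
        intro k hk
        have hA : (-1:ℂ)^N * (-1:ℂ)^k = (-1:ℂ)^(N+k) := (pow_add (-1:ℂ) N k).symm
        have hB : q^((N:ℤ)^2) * q^(((k:ℤ)-N)^2 - (N:ℤ)^2) = q^(((k:ℤ)-N)^2) := by
          rw [← zpow_add₀ hq0]; congr 1; ring
        linear_combination (q^((N:ℤ)^2) * q^(((k:ℤ)-N)^2 - (N:ℤ)^2) * gbC (q^2) (2*N) k) * hA
          + ((-1:ℂ)^(N+k) * gbC (q^2) (2*N) k) * hB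

lemma gbC_ratio {Q : ℂ} (hQ : ∀ j : ℕ, (1:ℂ) - Q^(j+1) ≠ 0) (n k : ℕ) (hk : k ≤ n) :
    gbC Q n k = (∏ j ∈ Finset.range n, (1-Q^(j+1)))
      / ((∏ j ∈ Finset.range (n-k), (1-Q^(j+1))) * ∏ j ∈ Finset.range k, (1-Q^(j+1))) := by
  rw [gbC, if_pos hk]
  have hsplit : ∏ j ∈ Finset.range n, (1-Q^(j+1))
      = (∏ j ∈ Finset.range (n-k), (1-Q^(j+1))) * ∏ j ∈ Finset.range k, (1 - Q^(n-k+j+1)) := by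
    have h := Finset.prod_range_add (fun j => (1 - Q^(j+1))) (n-k) k
    rw [show n-k+k = n from by omega] at h
    simpa using h
  rw [hsplit]
  have h1 : (∏ j ∈ Finset.range (n-k), (1-Q^(j+1))) ≠ 0 :=
    Finset.prod_ne_zero_iff.mpr fun j _ => hQ j
  have h2 : (∏ j ∈ Finset.range k, (1-Q^(j+1))) ≠ 0 :=
    Finset.prod_ne_zero_iff.mpr fun j _ => hQ j
  field_simp

lemma gbC_norm_le {Q : ℂ} (hQ1 : ‖Q‖ < 1) (n k : ℕ) :
    ‖gbC Q n k‖ ≤ Real.exp (‖Q‖/(1-‖Q‖)) / Real.exp (-(‖Q‖/(1-‖Q‖)^2)) := by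
  rw [gbC]
  split
  · rw [norm_div]
    apply div_le_div₀ (Real.exp_nonneg _)
      (jtp_norm_prod_le hQ1 k (fun j => n-k+j+1) (fun j => by show j+1 ≤ n-k+j+1; omega))
      (Real.exp_pos _) (jtp_norm_prod_ge hQ1 k)
  · simp only [norm_zero]
    positivity

lemma aux_neg_one_pow (a b : ℕ) (h : a % 2 = b % 2) : ((-1:ℂ))^a = (-1)^b := by
  conv_lhs => rw [← Nat.div_add_mod a 2]
  conv_rhs => rw [← Nat.div_add_mod b 2]
  rw [pow_add, pow_add, pow_mul, pow_mul, neg_one_sq, one_pow, one_pow, h]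

lemma aux_summable_int {r : ℝ} (h0 : 0 ≤ r) (h1 : r < 1) :
    Summable (fun m : ℤ => r^(m.natAbs)) := by
  apply Summable.of_nat_of_neg
  · simpa using summable_geometric_of_lt_one h0 h1
  · apply Summable.congr (summable_geometric_of_lt_one h0 h1)
    intro n
    simp

end JTPAux

theorem phi_neg_eta_quotient (q : ℂ) (hq : ‖q‖ < 1) :
    phi (-q) = E q ^ 2 / E (q ^ 2) := by
  by_cases hq0 : q = 0
  · subst hq0
    have hphi : phi (-0 : ℂ) = 1 := by
      rw [neg_zero, phi, tsum_eq_single 0]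
      · norm_num
      · intro n hn
        rw [zero_zpow _ (pow_ne_zero 2 hn)]
    have hE : E (0:ℂ) = 1 := by
      rw [E]
      have : ∀ n : ℕ, (1 : ℂ) - 0^(n+1) = 1 := by
        intro n; rw [zero_pow (Nat.succ_ne_zero n)]; ring
      rw [tprod_congr this, tprod_one]
    rw [hphi, show ((0:ℂ)^2) = 0 from by ring, hE]
    norm_num
  -- main case
  have hr0 : (0:ℝ) ≤ ‖q‖ := norm_nonneg q
  have hQ1 : ‖q^2‖ < 1 := by rw [norm_pow]; nlinarith
  have hQ0 : (0:ℝ) ≤ ‖q^2‖ := norm_nonneg _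
  have hQne : ∀ j : ℕ, (1:ℂ) - (q^2)^(j+1) ≠ 0 := by
    intro j h
    have h1 : ((q^2)^(j+1)) = 1 := by linear_combination -h
    have hlt : ‖(q^2)^(j+1)‖ < 1 := by
      rw [norm_pow]
      calc ‖q^2‖^(j+1) ≤ ‖q^2‖^1 := pow_le_pow_of_le_one hQ0 hQ1.le (by omega)
        _ < 1 := by simpa using hQ1
    rw [h1, norm_one] at hlt
    exact lt_irrefl _ hlt
  -- summability and multipliability
  have hgeo : Summable (fun n : ℕ => ‖q‖^n) := summable_geometric_of_lt_one hr0 hq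
  have hnormlt : ∀ (z : ℂ), ‖z‖ < 1 → ∀ n : ℕ, ‖z^(n+1)‖ < 1 := by
    intro z hz n
    rw [norm_pow]
    calc ‖z‖^(n+1) ≤ ‖z‖^1 := pow_le_pow_of_le_one (norm_nonneg z) hz.le (by omega)
      _ < 1 := by simpa using hz
  have hM1 : Multipliable (fun n : ℕ => 1 - q^(n+1)) := by
    apply jtp_multipliable (hnormlt q hq)
    apply Summable.of_nonneg_of_le (fun n => norm_nonneg _) _ hgeo
    intro n
    rw [norm_pow]
    exact pow_le_pow_of_le_one hr0 hq.le (by omega)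
  have hM2 : Multipliable (fun n : ℕ => 1 - (q^2)^(n+1)) := by
    apply jtp_multipliable (hnormlt _ hQ1)
    apply Summable.of_nonneg_of_le (fun n => norm_nonneg _) _ (summable_geometric_of_lt_one hQ0 hQ1)
    intro n
    rw [norm_pow]
    exact pow_le_pow_of_le_one hQ0 hQ1.le (by omega)
  have hModd : Multipliable (fun i : ℕ => 1 - q^(2*i+1)) := by
    apply jtp_multipliable
    · intro i
      rw [norm_pow]
      calc ‖q‖^(2*i+1) ≤ ‖q‖^1 := pow_le_pow_of_le_one hr0 hq.le (by omega)
        _ < 1 := by simpa using hq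
    · apply Summable.of_nonneg_of_le (fun n => norm_nonneg _) _ hgeo
      intro i
      rw [norm_pow]
      exact pow_le_pow_of_le_one hr0 hq.le (by omega)
  -- limits of partial products
  have hP2 : Filter.Tendsto (fun t => ∏ j ∈ Finset.range t, (1 - (q^2)^(j+1)))
      Filter.atTop (nhds (E (q^2))) := by
    have : HasProd (fun n : ℕ => 1 - (q^2)^(n+1)) (E (q^2)) := hM2.hasProd
    exact this.tendsto_prod_nat
  have hLne : E (q^2) ≠ 0 := by
    intro h
    have h2 : Filter.Tendsto (fun t => ‖∏ j ∈ Finset.range t, (1 - (q^2)^(j+1))‖)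
        Filter.atTop (nhds 0) := by
      have := hP2.norm
      rwa [h, norm_zero] at this
    have h3 : Real.exp (-(‖q^2‖/(1-‖q^2‖)^2)) ≤ 0 :=
      ge_of_tendsto h2 (Filter.Eventually.of_forall (fun t => jtp_norm_prod_ge hQ1 t))
    linarith [Real.exp_pos (-(‖q^2‖/(1-‖q^2‖)^2))]
  have hOdd : Filter.Tendsto (fun N => ∏ i ∈ Finset.range N, (1 - q^(2*i+1)))
      Filter.atTop (nhds (∏' i : ℕ, (1 - q^(2*i+1)))) := hModd.hasProd.tendsto_prod_nat
  -- splitting E q into odd and even parts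
  have hEsplit : E q = (∏' i : ℕ, (1 - q^(2*i+1))) * E (q^2) := by
    have hsplit : ∀ t : ℕ, ∏ n ∈ Finset.range (2*t), (1 - q^(n+1))
        = (∏ i ∈ Finset.range t, (1 - q^(2*i+1)))
          * (∏ i ∈ Finset.range t, (1 - (q^2)^(i+1))) := by
      intro t
      induction t with
      | zero => simp
      | succ t ih =>
        rw [show 2*(t+1) = (2*t)+1+1 from by ring, Finset.prod_range_succ,
          Finset.prod_range_succ, ih, Finset.prod_range_succ, Finset.prod_range_succ]
        have e1 : ((q^2):ℂ)^(t+1) = q^(2*t+1+1) := by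
          rw [show 2*t+1+1 = 2*(t+1) from by ring, pow_mul]
        rw [e1]
        ring
    have h2t : Filter.Tendsto (fun t : ℕ => 2*t) Filter.atTop Filter.atTop :=
      Filter.tendsto_atTop_atTop.mpr (fun b => ⟨b, fun a ha => by omega⟩)
    have h1 : Filter.Tendsto (fun t => ∏ n ∈ Finset.range (2*t), (1 - q^(n+1)))
        Filter.atTop (nhds (E q)) := by
      have hEq : HasProd (fun n : ℕ => 1 - q^(n+1)) (E q) := hM1.hasProd
      exact hEq.tendsto_prod_nat.comp h2t
    exact tendsto_nhds_unique (h1.congr hsplit) (hOdd.mul hP2)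
  -- the family of truncated sums
  set c : ℝ := Real.exp (-(‖q^2‖/(1-‖q^2‖)^2)) with hc
  set K : ℝ := Real.exp (‖q^2‖/(1-‖q^2‖)) / c with hK
  have hcpos : 0 < c := Real.exp_pos _
  have hKpos : 0 < K := div_pos (Real.exp_pos _) hcpos
  set f : ℕ → ℤ → ℂ := fun N m =>
    if m.natAbs ≤ N then
      (-1:ℂ)^(m.natAbs) * q^(m^2) * gbC (q^2) (2*N) ((m+N).toNat)
    else 0 with hfdef
  have hzq : ∀ m : ℤ, q^(m^2) = q^((m.natAbs^2 : ℕ)) := by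
    intro m
    rw [← zpow_natCast q (m.natAbs^2)]
    congr 1
    push_cast
    rw [sq_abs]
  -- bound
  have hfnorm : ∀ (N : ℕ) (m : ℤ), ‖f N m‖ ≤ K * ‖q‖^(m.natAbs) := by
    intro N m
    rw [hfdef]
    simp only []
    split
    · rw [norm_mul, norm_mul, norm_pow, norm_neg, norm_one, one_pow, one_mul]
      have h1 : ‖q^(m^2)‖ ≤ ‖q‖^(m.natAbs) := by
        rw [hzq m, norm_pow]
        exact pow_le_pow_of_le_one hr0 hq.le (Nat.le_self_pow two_ne_zero _)
      have h3 := gbC_norm_le hQ1 (2*N) ((m+N).toNat)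
      calc ‖q^(m^2)‖ * ‖gbC (q^2) (2*N) ((m+N).toNat)‖
          ≤ ‖q‖^(m.natAbs) * K :=
            mul_le_mul h1 h3 (norm_nonneg _) (by positivity)
        _ = K * ‖q‖^(m.natAbs) := mul_comm _ _
    · rw [norm_zero]
      positivity
  have hbdsummable : Summable (fun m : ℤ => K * ‖q‖^(m.natAbs)) :=
    (aux_summable_int hr0 hq).mul_left K
  -- pointwise limits
  have hpt : ∀ m : ℤ, Filter.Tendsto (fun N => f N m) Filter.atTop
      (nhds ((-1:ℂ)^(m.natAbs) * q^(m^2) / E (q^2))) := by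
    intro m
    have h2N : Filter.Tendsto (fun N : ℕ => 2*N) Filter.atTop Filter.atTop :=
      Filter.tendsto_atTop_atTop.mpr (fun b => ⟨b, fun a ha => by omega⟩)
    have hsub : Filter.Tendsto (fun N : ℕ => 2*N - ((m : ℤ)+N).toNat)
        Filter.atTop Filter.atTop :=
      Filter.tendsto_atTop_atTop.mpr (fun b => ⟨b + m.natAbs, fun a ha => by omega⟩)
    have hadd : Filter.Tendsto (fun N : ℕ => ((m : ℤ)+N).toNat) Filter.atTop Filter.atTop :=
      Filter.tendsto_atTop_atTop.mpr (fun b => ⟨b + m.natAbs, fun a ha => by omega⟩)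
    have hKL : Filter.Tendsto (fun N : ℕ =>
        ((-1:ℂ)^(m.natAbs) * q^(m^2)) *
          ((∏ j ∈ Finset.range (2*N), (1 - (q^2)^(j+1))) /
            ((∏ j ∈ Finset.range (2*N - ((m : ℤ)+N).toNat), (1 - (q^2)^(j+1)))
              * (∏ j ∈ Finset.range (((m : ℤ)+N).toNat), (1 - (q^2)^(j+1))))))
        Filter.atTop
        (nhds (((-1:ℂ)^(m.natAbs) * q^(m^2)) * (E (q^2) / (E (q^2) * E (q^2))))) := by
      apply Filter.Tendsto.const_mul
      exact Filter.Tendsto.div (hP2.comp h2N) ((hP2.comp hsub).mul (hP2.comp hadd))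
        (mul_ne_zero hLne hLne)
    have hval : ((-1:ℂ)^(m.natAbs) * q^(m^2)) * (E (q^2) / (E (q^2) * E (q^2)))
        = (-1:ℂ)^(m.natAbs) * q^(m^2) / E (q^2) := by
      field_simp
    rw [hval] at hKL
    apply hKL.congr'
    filter_upwards [Filter.eventually_ge_atTop m.natAbs] with N hN
    have hle : ((m : ℤ)+N).toNat ≤ 2*N := by omega
    rw [hfdef]
    simp only []
    rw [if_pos hN, gbC_ratio hQne (2*N) (((m : ℤ)+N).toNat) hle]
  -- dominated convergence
  have hDC := tendsto_tsum_of_dominated_convergence hbdsummable hpt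
    (Filter.Eventually.of_forall (fun N => fun m => hfnorm N m))
  -- per-N evaluation of the series
  have hfin : ∀ N : ℕ, (∑' m : ℤ, f N m) = (∏ i ∈ Finset.range N, (1 - q^(2*i+1)))^2 := by
    intro N
    rw [jtp_finite hq0 hQne N]
    have hsupp : ∀ m : ℤ, m ∉ Finset.Icc (-(N:ℤ)) N → f N m = 0 := by
      intro m hm
      rw [hfdef]
      simp only []
      rw [if_neg]
      intro hcon
      apply hm
      rw [Finset.mem_Icc]
      omega
    rw [tsum_eq_sum hsupp]
    apply Finset.sum_nbij' (i := fun m => ((m : ℤ)+N).toNat) (j := fun k => (k : ℤ) - N)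
    · intro m hm
      rw [Finset.mem_Icc] at hm
      rw [Finset.mem_range]
      omega
    · intro k hk
      rw [Finset.mem_range] at hk
      rw [Finset.mem_Icc]
      omega
    · intro m hm
      rw [Finset.mem_Icc] at hm
      omega
    · intro k hk
      rw [Finset.mem_range] at hk
      omega
    · intro m hm
      rw [Finset.mem_Icc] at hm
      rw [hfdef]
      simp only []
      rw [if_pos (by omega : m.natAbs ≤ N)]
      have e1 : (((m+(N:ℤ)).toNat : ℤ) - N) = m := by omega
      rw [e1]
      congr 1
      congr 1
      exact aux_neg_one_pow _ _ (by omega)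
  -- identify limits
  have hlim2 : Filter.Tendsto (fun N => (∏ i ∈ Finset.range N, (1 - q^(2*i+1)))^2)
      Filter.atTop (nhds (∑' m : ℤ, (-1:ℂ)^(m.natAbs) * q^(m^2) / E (q^2))) :=
    hDC.congr hfin
  have hkey : (∑' m : ℤ, (-1:ℂ)^(m.natAbs) * q^(m^2) / E (q^2))
      = (∏' i : ℕ, (1 - q^(2*i+1)))^2 :=
    tendsto_nhds_unique hlim2 (hOdd.pow 2)
  -- compute the tsum as phi(-q)/E(q²)
  have hphi : (∑' m : ℤ, (-1:ℂ)^(m.natAbs) * q^(m^2) / E (q^2)) = phi (-q) / E (q^2) := by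
    rw [phi, ← tsum_div_const]
    apply tsum_congr
    intro m
    congr 1
    rw [show (-q) = (-1 : ℂ) * q from by ring, mul_zpow]
    congr 1
    rw [show ((-1:ℂ))^(m^2) = ((-1:ℂ))^((m.natAbs^2 : ℕ)) from by
      rw [← zpow_natCast (-1 : ℂ) (m.natAbs^2)]
      congr 1
      push_cast
      rw [sq_abs]]
    apply aux_neg_one_pow
    rcases Nat.even_or_odd m.natAbs with he | ho
    · obtain ⟨u, hu⟩ := he
      have : m.natAbs^2 = 2*(2*u*u) := by rw [hu]; ring
      omega
    · obtain ⟨u, hu⟩ := ho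
      have : m.natAbs^2 = 2*(2*u^2+2*u)+1 := by rw [hu]; ring
      omega
  -- conclusion
  have hphival : phi (-q) = (∏' i : ℕ, (1 - q^(2*i+1)))^2 * E (q^2) := by
    have h := hphi.symm.trans hkey
    field_simp at h
    linear_combination h
  rw [hphival, hEsplit]
  field_simp
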